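/- For all integers k, ℓ ≥ 2 and all natural numbers n ≥ 0, the identity g_{k,ℓ}(k^2·n) = −ℓ·g_{k,ℓ}(n) + (ℓ + 1)·g_{k,ℓ}(k·n) holds (as an identity of integers). -/
import Mathlib

/-- For integers `k, ℓ ≥ 2`, `g k ℓ 0 = 1` and `g k ℓ n = 1 + ℓ ^ ⌊log_k n⌋` for `n > 0`. -/
def g (k ℓ : ℕ) (n : ℕ) : ℕ := if n = 0 then 1 else 1 + ℓ ^ Nat.log k n

theorem stmt_1 (k ℓ : ℕ) (hk : 2 ≤ k) (hℓ : 2 ≤ ℓ) (n : ℕ) :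
    (g k ℓ (k ^ 2 * n) : ℤ) = -(ℓ : ℤ) * g k ℓ n + ((ℓ : ℤ) + 1) * g k ℓ (k * n) := by
  have hk0 : k ≠ 0 := by omega
  rcases eq_or_ne n 0 with rfl | hn
  · simp [g]
  · have h1 : k * n ≠ 0 := by positivity
    have h2 : k ^ 2 * n ≠ 0 := by positivity
    have l1 : Nat.log k (k * n) = Nat.log k n + 1 := by
      rw [mul_comm, Nat.log_mul_base hk hn]
    have l2 : Nat.log k (k ^ 2 * n) = Nat.log k n + 2 := by
      rw [pow_two, mul_assoc, mul_comm k (k*n), Nat.log_mul_base hk h1, l1]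
    simp only [g, if_neg hn, if_neg h1, if_neg h2, l1, l2]
    push_cast
    ring
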